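/- Bounded distortion of the gnomonic model on bounded sets: for all u, v ∈ ℝ^d, d_S(u,v) ≤ ‖u − v‖; and for every ρ > 0, if u and v lie in the closed Euclidean ball of radius ρ centered at the origin, then d_S(u,v) ≥ ‖u − v‖/(1 + ρ²). -/
import Mathlib


open scoped RealInnerProductSpace
open Metric Real

lemma gnomonic_key (s t p : ℝ) (hs : 0 ≤ s) (ht : 0 ≤ t) (hp : p ^ 2 ≤ s * t) :
    Real.sqrt (1 + s) * Real.sqrt (1 + t) * (4 - (s + t - 2 * p)) ≤
      (1 + p) * (4 + (s + t - 2 * p)) := by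
  have hq0 : 0 ≤ s + t - 2 * p := by nlinarith [sq_nonneg (s - t), sq_nonneg (s + t - 2 * p)]
  have h4p : 0 ≤ (s + t - 2 * p) * ((s + t - 2 * p) + 4 * p) := by nlinarith [sq_nonneg (s - t)]
  have hE : Real.sqrt (1 + s) * Real.sqrt (1 + t) = Real.sqrt ((1 + s) * (1 + t)) :=
    (Real.sqrt_mul (by linarith) _).symm
  rw [hE]
  set q := s + t - 2 * p with hqdef
  set D := Real.sqrt ((1 + s) * (1 + t)) with hDdef
  have hD0 : 0 ≤ D := Real.sqrt_nonneg _
  have hDsq : D ^ 2 = (1 + s) * (1 + t) := Real.sq_sqrt (by nlinarith)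
  rcases le_or_gt q 4 with h4 | h4
  · have h1p : 0 ≤ 1 + p := by nlinarith [sq_nonneg (s - t)]
    have hA0 : 0 ≤ (1 + p) * (4 + q) := by nlinarith
    have hB0 : 0 ≤ D * (4 - q) := mul_nonneg hD0 (by linarith)
    have hsq : (D * (4 - q)) ^ 2 ≤ ((1 + p) * (4 + q)) ^ 2 := by
      nlinarith [mul_nonneg h4p
          (show 0 ≤ 16 * (1 + p) + q * (4 - q) by
            nlinarith [mul_nonneg hq0 (show (0:ℝ) ≤ 4 - q by linarith)]),
        mul_nonneg (show 0 ≤ q * (q + 4 * p) - 4 * (s * t - p ^ 2) by nlinarith [sq_nonneg (s - t)])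
          (sq_nonneg (4 - q)), hDsq]
    exact (pow_le_pow_iff_left₀ hB0 hA0 two_ne_zero).mp hsq
  · rcases le_or_gt 0 (1 + p) with h1p | h1p
    · have hB : D * (4 - q) ≤ 0 := mul_nonpos_iff.mpr (Or.inl ⟨hD0, by linarith⟩)
      exact hB.trans (mul_nonneg h1p (by linarith))
    · have hqp : 0 ≤ q + 4 * p := by nlinarith
      have h16 : 16 * (1 + p) ^ 2 ≤ (q - 4) ^ 2 := by
        nlinarith [mul_nonneg hqp (show 0 ≤ q - 8 - 4 * p by linarith)]
      have hsq : ((1 + p) * (4 + q)) ^ 2 ≤ (D * (4 - q)) ^ 2 := by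
        nlinarith [mul_le_mul_of_nonneg_left h16 hq0,
          mul_nonneg (show 0 ≤ s * t - p ^ 2 by linarith) (sq_nonneg (q - 4)), hDsq]
      have hA0 : -((1 + p) * (4 + q)) ≥ 0 := by nlinarith
      have hB0 : -(D * (4 - q)) ≥ 0 := by
        have : D * (4 - q) ≤ 0 := mul_nonpos_iff.mpr (Or.inl ⟨hD0, by linarith⟩)
        linarith
      have hsq' : (-((1 + p) * (4 + q))) ^ 2 ≤ (-(D * (4 - q))) ^ 2 := by
        simpa using hsq
      have := (pow_le_pow_iff_left₀ hA0 hB0 two_ne_zero).mp hsq'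
      linarith

lemma gnomonic_arccos_le {c r : ℝ} (hr : 0 ≤ r) (hc : (4 - r ^ 2) / (4 + r ^ 2) ≤ c) :
    Real.arccos c ≤ r := by
  rcases le_or_gt π r with hπ | hπ
  · exact (Real.arccos_le_pi c).trans hπ
  · -- show cos r ≤ c, then conclude
    have hx0 : 0 ≤ r / 2 := by linarith
    have hat0 : 0 ≤ Real.arctan (r / 2) := by
      rw [← Real.arctan_zero]
      exact Real.arctan_strictMono.monotone hx0
    have harctan : Real.arctan (r / 2) ≤ r / 2 := by
      have h := Real.le_tan hat0 (Real.arctan_lt_pi_div_two (r / 2))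
      rwa [Real.tan_arctan] at h
    have hcos2 : Real.cos (2 * Real.arctan (r / 2)) = (4 - r ^ 2) / (4 + r ^ 2) := by
      rw [Real.cos_two_mul, Real.cos_arctan]
      have h1 : (0:ℝ) < 1 + (r / 2) ^ 2 := by positivity
      rw [div_pow, one_pow, Real.sq_sqrt h1.le]
      field_simp
      ring
    have hcosr : Real.cos r ≤ c := by
      have h2 : Real.cos r ≤ Real.cos (2 * Real.arctan (r / 2)) :=
        Real.cos_le_cos_of_nonneg_of_le_pi
          (by linarith) hπ.le (by linarith)
      rw [hcos2] at h2
      linarith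
    calc Real.arccos c ≤ Real.arccos (Real.cos r) := by
          rw [Real.arccos, Real.arccos]
          have := Real.monotone_arcsin hcosr
          linarith
      _ = r := Real.arccos_cos hr hπ.le

/-- The gnomonic spherical distance on `ℝ^d`: the pullback of the great-circle distance on the
unit sphere through the gnomonic (central) projection of the open upper hemisphere. -/
noncomputable def gnomonicDist {d : ℕ} (u v : EuclideanSpace ℝ (Fin d)) : ℝ :=
  Real.arccos ((1 + ⟪u, v⟫) / (Real.sqrt (1 + ‖u‖ ^ 2) * Real.sqrt (1 + ‖v‖ ^ 2)))

theorem gnomonicDist_bounded_distortion {d : ℕ} (u v : EuclideanSpace ℝ (Fin d)) :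
    gnomonicDist u v ≤ ‖u - v‖ ∧
    ∀ ρ : ℝ, 0 < ρ →
      u ∈ closedBall (0 : EuclideanSpace ℝ (Fin d)) ρ →
      v ∈ closedBall (0 : EuclideanSpace ℝ (Fin d)) ρ →
        ‖u - v‖ / (1 + ρ ^ 2) ≤ gnomonicDist u v := by
  set s := ‖u‖ ^ 2 with hsdef
  set t := ‖v‖ ^ 2 with htdef
  set p := ⟪u, v⟫ with hpdef
  have hs : 0 ≤ s := sq_nonneg _
  have ht : 0 ≤ t := sq_nonneg _
  have hp : p ^ 2 ≤ s * t := by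
    have h := abs_real_inner_le_norm u v
    have h2 : |p| ^ 2 ≤ (‖u‖ * ‖v‖) ^ 2 := pow_le_pow_left₀ (abs_nonneg _) h 2
    rw [sq_abs] at h2
    calc p ^ 2 ≤ (‖u‖ * ‖v‖) ^ 2 := h2
      _ = s * t := by rw [mul_pow]
  have hq : ‖u - v‖ ^ 2 = s + t - 2 * p := by
    rw [norm_sub_sq_real]; ring
  have hEpos : 0 < Real.sqrt (1 + s) * Real.sqrt (1 + t) := by positivity
  constructor
  · -- upper bound
    apply gnomonic_arccos_le (norm_nonneg _)
    rw [div_le_div_iff₀ (by positivity) hEpos, hq]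
    have := gnomonic_key s t p hs ht hp
    calc (4 - (s + t - 2 * p)) * (Real.sqrt (1 + s) * Real.sqrt (1 + t))
        = Real.sqrt (1 + s) * Real.sqrt (1 + t) * (4 - (s + t - 2 * p)) := by ring
      _ ≤ _ := this
  · -- lower bound
    intro ρ hρ hu hv
    have hu' : ‖u‖ ≤ ρ := by rwa [mem_closedBall_zero_iff] at hu
    have hv' : ‖v‖ ≤ ρ := by rwa [mem_closedBall_zero_iff] at hv
    have hsρ : s ≤ ρ ^ 2 := pow_le_pow_left₀ (norm_nonneg _) hu' 2
    have htρ : t ≤ ρ ^ 2 := pow_le_pow_left₀ (norm_nonneg _) hv' 2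
    have hP : (1 + s) * (1 + t) ≤ (1 + ρ ^ 2) ^ 2 := by nlinarith
    have hρ2 : (0:ℝ) < 1 + ρ ^ 2 := by positivity
    set c := (1 + p) / (Real.sqrt (1 + s) * Real.sqrt (1 + t)) with hcdef
    have hc2 : c ^ 2 = (1 + p) ^ 2 / ((1 + s) * (1 + t)) := by
      rw [hcdef, div_pow, mul_pow, Real.sq_sqrt (by linarith), Real.sq_sqrt (by linarith)]
    have hstep : ‖u - v‖ / (1 + ρ ^ 2) ≤ Real.sin (Real.arccos c) := by
      rw [Real.sin_arccos]
      apply Real.le_sqrt_of_sq_le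
      rw [div_pow, hc2, hq]
      rw [div_le_iff₀ (by positivity)]
      have hPpos : (0:ℝ) < (1 + s) * (1 + t) := by nlinarith
      have key2 : (s + t - 2 * p) * ((1 + s) * (1 + t)) ≤
          ((1 + s) * (1 + t) - (1 + p) ^ 2) * (1 + ρ ^ 2) ^ 2 := by
        have hq0 : 0 ≤ s + t - 2 * p := by rw [← hq]; positivity
        have hG : 0 ≤ s * t - p ^ 2 := by linarith
        nlinarith [mul_le_mul_of_nonneg_left hP hq0,
          mul_nonneg hG (sq_nonneg (1 + ρ ^ 2))]
      have expand : (1 - (1 + p) ^ 2 / ((1 + s) * (1 + t))) * (1 + ρ ^ 2) ^ 2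
          = ((1 + s) * (1 + t) - (1 + p) ^ 2) * (1 + ρ ^ 2) ^ 2 / ((1 + s) * (1 + t)) := by
        field_simp
      rw [expand, le_div_iff₀ hPpos]
      exact key2
    exact hstep.trans (Real.sin_le (Real.arccos_nonneg _))
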